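/- Suppose the set 𝒳 = {x^0, x^1, …, x^p} is poised in the minimum Frobenius norm sense, let Δ > 0 with 𝒳 ⊂ B(x^0, Δ), and let Λ > 0 be such that 𝒳 is Λ-poised in B(x^0, Δ) in the minimum Frobenius norm sense. Define L̂ = (1/Δ)[x^1 − x^0, x^2 − x^0, …, x^p − x^0]ᵀ ∈ ℝ^{p×d}, assume L̂ᵀL̂ is invertible, and set L̂† = (L̂ᵀL̂)^{-1}L̂ᵀ. Then ‖L̂†‖ ≤ √(p+1) Λ, where ‖·‖ is the operator 2-norm. -/

import Mathlib

noncomputable section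

open scoped RealInnerProductSpace
open Matrix

/-- Index type for the degree-two monomials `x_i x_j` with `i ≤ j`;
it has cardinality `d(d+1)/2`. -/
abbrev QIdx (d : ℕ) := {ij : Fin d × Fin d // ij.1 ≤ ij.2}

/-- The vector `μ(y) = (1, y_1, …, y_d)` of degree-zero and degree-one monomials. -/
def muVec {d : ℕ} (y : EuclideanSpace ℝ (Fin d)) : Fin (d + 1) → ℝ :=
  Fin.cons 1 fun j => y j

/-- The vector `ν(y)` of degree-two monomials `y_i y_j`, `i ≤ j`. -/
def nuVec {d : ℕ} (y : EuclideanSpace ℝ (Fin d)) : QIdx d → ℝ :=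
  fun ij => y ij.1.1 * y ij.1.2

/-- The matrix `M` with `M_{ij} = μ_i(x^j)`. -/
def Mmat {d p : ℕ} (x : Fin (p + 1) → EuclideanSpace ℝ (Fin d)) :
    Matrix (Fin (d + 1)) (Fin (p + 1)) ℝ :=
  Matrix.of fun i j => muVec (x j) i

/-- The matrix `N` with `N_{ij} = ν_i(x^j)`. -/
def Nmat {d p : ℕ} (x : Fin (p + 1) → EuclideanSpace ℝ (Fin d)) :
    Matrix (QIdx d) (Fin (p + 1)) ℝ :=
  Matrix.of fun i j => nuVec (x j) i

/-- The KKT matrix `W = [[NᵀN, Mᵀ], [M, 0]]`. -/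
def Wmat {d p : ℕ} (x : Fin (p + 1) → EuclideanSpace ℝ (Fin d)) :
    Matrix (Fin (p + 1) ⊕ Fin (d + 1)) (Fin (p + 1) ⊕ Fin (d + 1)) ℝ :=
  Matrix.fromBlocks ((Nmat x)ᵀ * Nmat x) (Mmat x)ᵀ (Mmat x) 0

/-- `𝒳` is poised in the minimum Frobenius norm sense: the KKT matrix `W` is nonsingular. -/
def MFNPoised {d p : ℕ} (x : Fin (p + 1) → EuclideanSpace ℝ (Fin d)) : Prop :=
  IsUnit (Wmat x).det

/-- The quadratic polynomial `m(y) = αᵀμ(y) + βᵀν(y)` with coefficients `(α, β)`. -/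
def modelFun {d : ℕ} (a : Fin (d + 1) → ℝ) (b : QIdx d → ℝ)
    (y : EuclideanSpace ℝ (Fin d)) : ℝ :=
  (∑ i, a i * muVec y i) + ∑ ij, b ij * nuVec y ij

/-- `(α, β)` solves the minimum Frobenius norm interpolation problem for the data `v`:
it satisfies the interpolation constraints `Mᵀα + Nᵀβ = v` and minimizes `(1/2)‖β‖²`
among all coefficient pairs satisfying the constraints. -/
def IsMFNSol {d p : ℕ} (x : Fin (p + 1) → EuclideanSpace ℝ (Fin d))
    (v : Fin (p + 1) → ℝ) (a : Fin (d + 1) → ℝ) (b : QIdx d → ℝ) : Prop :=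
  (Mmat x)ᵀ.mulVec a + (Nmat x)ᵀ.mulVec b = v ∧
    ∀ (a' : Fin (d + 1) → ℝ) (b' : QIdx d → ℝ),
      (Mmat x)ᵀ.mulVec a' + (Nmat x)ᵀ.mulVec b' = v →
      ∑ ij, (b ij) ^ 2 ≤ ∑ ij, (b' ij) ^ 2

/-- The operator 2-norm of a real matrix. -/
noncomputable def opNorm2 {ι κ : Type*} [Fintype ι] [Fintype κ] [DecidableEq κ]
    (M : Matrix ι κ ℝ) : ℝ :=
  ‖(Matrix.toEuclideanLin M).toContinuousLinearMap‖


section Aux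

lemma sum_sq_eq_zero_iff' {ι : Type*} [Fintype ι] (f : ι → ℝ) :
    ∑ i, f i ^ 2 = 0 ↔ ∀ i, f i = 0 := by
  rw [Finset.sum_eq_zero_iff_of_nonneg (fun i _ => sq_nonneg (f i))]
  simp [pow_eq_zero_iff]

/-- Orthogonality of the MFN-optimal `b` to the kernel of the constraints. -/
lemma mfn_orth {d p : ℕ} (x : Fin (p + 1) → EuclideanSpace ℝ (Fin d))
    (v : Fin (p + 1) → ℝ) (a : Fin (d + 1) → ℝ) (b : QIdx d → ℝ)
    (h : IsMFNSol x v a b) (a' : Fin (d + 1) → ℝ) (b' : QIdx d → ℝ)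
    (hker : (Mmat x)ᵀ.mulVec a' + (Nmat x)ᵀ.mulVec b' = 0) :
    ∑ ij, b ij * b' ij = 0 := by
  obtain ⟨hfeas, hmin⟩ := h
  set S := ∑ ij, b ij * b' ij with hS
  set T := ∑ ij, b' ij ^ 2 with hT
  have hT0 : 0 ≤ T := Finset.sum_nonneg fun _ _ => sq_nonneg _
  have key : ∀ t : ℝ, 0 ≤ 2 * t * S + t ^ 2 * T := by
    intro t
    have hfeas' : (Mmat x)ᵀ.mulVec (a + t • a') + (Nmat x)ᵀ.mulVec (b + t • b') = v := by
      rw [Matrix.mulVec_add, Matrix.mulVec_add, Matrix.mulVec_smul, Matrix.mulVec_smul]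
      have e : (Mmat x)ᵀ.mulVec a + t • (Mmat x)ᵀ.mulVec a' +
          ((Nmat x)ᵀ.mulVec b + t • (Nmat x)ᵀ.mulVec b')
          = ((Mmat x)ᵀ.mulVec a + (Nmat x)ᵀ.mulVec b) +
            t • ((Mmat x)ᵀ.mulVec a' + (Nmat x)ᵀ.mulVec b') := by
        rw [smul_add]; abel
      rw [e, hfeas, hker, smul_zero, add_zero]
    have hle := hmin (a + t • a') (b + t • b') hfeas'
    have expand : ∑ ij, ((b + t • b') ij) ^ 2 = ∑ ij, b ij ^ 2 + (2 * t * S + t ^ 2 * T) := by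
      simp only [hS, hT, Pi.add_apply, Pi.smul_apply, smul_eq_mul, Finset.mul_sum]
      rw [← Finset.sum_add_distrib, ← Finset.sum_add_distrib]
      exact Finset.sum_congr rfl fun ij _ => by ring
    rw [expand] at hle
    linarith
  rcases eq_or_lt_of_le hT0 with hT' | hTpos
  · have hb' : ∀ ij, b' ij = 0 := (sum_sq_eq_zero_iff' b').mp hT'.symm
    simp [hS, hb']
  · have h1 := key (-S / T)
    have h2 : 2 * (-S / T) * S + (-S / T) ^ 2 * T = -(S ^ 2) / T := by
      field_simp; ring
    rw [h2] at h1
    have h3 : 0 ≤ -(S ^ 2) := by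
      have := mul_nonneg h1 hTpos.le
      rwa [div_mul_cancel₀ _ (ne_of_gt hTpos)] at this
    have : S ^ 2 = 0 := le_antisymm (by linarith) (sq_nonneg S)
    exact pow_eq_zero_iff (by norm_num) |>.mp this

/-- Poisedness makes `Mᵀ` injective. -/
lemma mtrans_inj {d p : ℕ} (x : Fin (p + 1) → EuclideanSpace ℝ (Fin d))
    (hpoised : MFNPoised x) (α : Fin (d + 1) → ℝ)
    (hα : (Mmat x)ᵀ.mulVec α = 0) : α = 0 := by
  have hW : (Wmat x)⁻¹ * Wmat x = 1 := Matrix.nonsing_inv_mul _ hpoised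
  have h0 : (Wmat x).mulVec (Sum.elim (0 : Fin (p + 1) → ℝ) α) = 0 := by
    rw [Wmat, Matrix.fromBlocks_mulVec]
    funext k
    cases k <;> simp [hα]
  have hz : Sum.elim (0 : Fin (p + 1) → ℝ) α = 0 := by
    have := congrArg (fun v => (Wmat x)⁻¹.mulVec v) h0
    simpa [Matrix.mulVec_mulVec, hW, Matrix.one_mulVec, Matrix.mulVec_zero] using this
  funext k
  exact congrFun hz (Sum.inr k)

end Aux

/-- If `𝒳` is `Λ`-poised in `B(x^0, Δ)` in the minimum Frobenius norm sense,
then the pseudoinverse of the scaled displacement matrix satisfies `‖L̂†‖ ≤ √(p+1) Λ`. -/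
theorem pinv_bound_of_lambda_poised
    {d p : ℕ} (hd : 1 ≤ d) (hdp : d ≤ p) (hcard : p + 1 ≤ (d + 1) * (d + 2) / 2)
    (x : Fin (p + 1) → EuclideanSpace ℝ (Fin d))
    (hxinj : Function.Injective x)
    (hpoised : MFNPoised x)
    (Δ : ℝ) (hΔ : 0 < Δ)
    (hx : ∀ i, x i ∈ Metric.closedBall (x 0) Δ)
    (Λ : ℝ) (hΛ : 0 < Λ)
    (la : Fin (p + 1) → Fin (d + 1) → ℝ) (lb : Fin (p + 1) → QIdx d → ℝ)
    (hlagrange : ∀ i, IsMFNSol x (Pi.single i 1) (la i) (lb i))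
    (hlampoised : ∀ i, ∀ y ∈ Metric.closedBall (x 0) Δ, |modelFun (la i) (lb i) y| ≤ Λ)
    (Lhat : Matrix (Fin p) (Fin d) ℝ)
    (hLhat : ∀ (i : Fin p) (j : Fin d), Lhat i j = (x i.succ j - x 0 j) / Δ)
    (hinv : IsUnit (Lhatᵀ * Lhat).det)
    (Lpinv : Matrix (Fin d) (Fin p) ℝ)
    (hLpinv : Lpinv = (Lhatᵀ * Lhat)⁻¹ * Lhatᵀ) :
    opNorm2 Lpinv ≤ Real.sqrt (p + 1) * Λ := by
  have hΔ' : Δ ≠ 0 := ne_of_gt hΔ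
  -- Step 1: reproduction of linear polynomials by the MFN Lagrange basis.
  have reproduce : ∀ (a : Fin (d + 1) → ℝ) (v : Fin (p + 1) → ℝ),
      (Mmat x)ᵀ.mulVec a = v → ∀ y : EuclideanSpace ℝ (Fin d),
      ∑ j, v j * modelFun (la j) (lb j) y = ∑ i, a i * muVec y i := by
    intro a v hv y
    set A : Fin (d + 1) → ℝ := fun i => ∑ j, v j * la j i with hA
    set B : QIdx d → ℝ := fun ij => ∑ j, v j * lb j ij with hB
    have hj : ∀ (j : Fin (p + 1)) k,
        ((Mmat x)ᵀ.mulVec (la j)) k + ((Nmat x)ᵀ.mulVec (lb j)) k = (Pi.single j 1 : Fin (p+1) → ℝ) k := by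
      intro j k
      have := congrFun (hlagrange j).1 k
      simpa using this
    have hfeasA : (Mmat x)ᵀ.mulVec A + (Nmat x)ᵀ.mulVec B = v := by
      funext k
      have swap1 : ∑ i, (Mmat x)ᵀ k i * A i
          = ∑ j, v j * ∑ i, (Mmat x)ᵀ k i * la j i := by
        simp only [hA, Finset.mul_sum]
        rw [Finset.sum_comm]
        exact Finset.sum_congr rfl fun j _ => Finset.sum_congr rfl fun i _ => by ring
      have swap2 : ∑ ij, (Nmat x)ᵀ k ij * B ij
          = ∑ j, v j * ∑ ij, (Nmat x)ᵀ k ij * lb j ij := by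
        simp only [hB, Finset.mul_sum]
        rw [Finset.sum_comm]
        exact Finset.sum_congr rfl fun j _ => Finset.sum_congr rfl fun ij _ => by ring
      calc ((Mmat x)ᵀ.mulVec A + (Nmat x)ᵀ.mulVec B) k
          = ∑ i, (Mmat x)ᵀ k i * A i + ∑ ij, (Nmat x)ᵀ k ij * B ij := rfl
        _ = ∑ j, v j * (((Mmat x)ᵀ.mulVec (la j)) k + ((Nmat x)ᵀ.mulVec (lb j)) k) := by
            rw [swap1, swap2, ← Finset.sum_add_distrib]
            exact Finset.sum_congr rfl fun j _ => by
              simp only [Matrix.mulVec, dotProduct]; ring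
        _ = ∑ j, v j * (Pi.single j 1 : Fin (p+1) → ℝ) k :=
            Finset.sum_congr rfl fun j _ => by rw [hj j k]
        _ = v k := by simp [Pi.single_apply]
    have hker : (Mmat x)ᵀ.mulVec (A - a) + (Nmat x)ᵀ.mulVec B = 0 := by
      rw [Matrix.mulVec_sub]
      funext k
      have h1 := congrFun hfeasA k
      have h2 := congrFun hv k
      simp only [Pi.add_apply, Pi.sub_apply, Pi.zero_apply] at h1 h2 ⊢
      linarith
    have hB0 : ∀ ij, B ij = 0 := by
      have horth : ∀ j : Fin (p + 1), ∑ ij, lb j ij * B ij = 0 :=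
        fun j => mfn_orth x _ _ _ (hlagrange j) (A - a) B hker
      have hBB : ∑ ij, B ij ^ 2 = 0 := by
        calc ∑ ij, B ij ^ 2 = ∑ ij, B ij * B ij :=
              Finset.sum_congr rfl fun ij _ => by ring
          _ = ∑ ij, (∑ j, v j * lb j ij) * B ij :=
              Finset.sum_congr rfl fun ij _ => by rw [congrFun hB ij]
          _ = ∑ j, v j * ∑ ij, lb j ij * B ij := by
              simp only [Finset.sum_mul, Finset.mul_sum]
              rw [Finset.sum_comm]
              exact Finset.sum_congr rfl fun j _ => Finset.sum_congr rfl fun ij _ => by ring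
          _ = 0 := by simp [horth]
      exact (sum_sq_eq_zero_iff' B).mp hBB
    have hAa : A = a := by
      have hNB : (Nmat x)ᵀ.mulVec B = 0 := by
        funext k
        simp only [Matrix.mulVec, dotProduct, Pi.zero_apply]
        exact Finset.sum_eq_zero fun ij _ => by rw [hB0 ij, mul_zero]
      rw [hNB, add_zero] at hker
      exact sub_eq_zero.mp (mtrans_inj x hpoised (A - a) hker)
    calc ∑ j, v j * modelFun (la j) (lb j) y
        = ∑ i, A i * muVec y i + ∑ ij, B ij * nuVec y ij := by
          simp only [modelFun, mul_add, Finset.sum_add_distrib, hA, hB, Finset.sum_mul,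
            Finset.mul_sum]
          congr 1
          · rw [Finset.sum_comm]
            exact Finset.sum_congr rfl fun j _ => Finset.sum_congr rfl fun i _ => by ring
          · rw [Finset.sum_comm]
            exact Finset.sum_congr rfl fun j _ => Finset.sum_congr rfl fun ij _ => by ring
      _ = ∑ i, a i * muVec y i := by
          rw [hAa]
          have h0 : ∑ ij, B ij * nuVec y ij = 0 :=
            Finset.sum_eq_zero fun ij _ => by rw [hB0 ij, zero_mul]
          rw [h0, add_zero]
  -- Step 2: the core singular-value-type bound.
  have core : ∀ w : Fin d → ℝ,
      ∑ k, w k ^ 2 ≤ ((p + 1 : ℝ) * Λ ^ 2) * ∑ i, (Lhat.mulVec w) i ^ 2 := by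
    intro w
    by_cases hw : ∀ k, w k = 0
    · have h1 : ∑ k, w k ^ 2 = 0 := Finset.sum_eq_zero fun k _ => by rw [hw k]; ring
      rw [h1]
      positivity
    · push_neg at hw
      obtain ⟨k0, hk0⟩ := hw
      have hsum_pos : 0 < ∑ k, w k ^ 2 :=
        Finset.sum_pos' (fun i _ => sq_nonneg _) ⟨k0, Finset.mem_univ _, by positivity⟩
      set s := Real.sqrt (∑ k, w k ^ 2) with hs
      have hspos : 0 < s := Real.sqrt_pos.mpr hsum_pos
      have hs' : s ≠ 0 := ne_of_gt hspos
      have hs2 : s ^ 2 = ∑ k, w k ^ 2 := Real.sq_sqrt hsum_pos.le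
      set a : Fin (d + 1) → ℝ :=
        Fin.cons (-(∑ k, w k * x 0 k) / Δ) (fun k => w k / Δ) with ha
      set v : Fin (p + 1) → ℝ := fun j => (∑ k, w k * (x j k - x 0 k)) / Δ with hv
      have hva : (Mmat x)ᵀ.mulVec a = v := by
        funext j
        have hlhs : ((Mmat x)ᵀ.mulVec a) j
            = -(∑ k, w k * x 0 k) / Δ + ∑ k, x j k * (w k / Δ) := by
          simp only [Matrix.mulVec, dotProduct, Matrix.transpose_apply, Mmat,
            Matrix.of_apply]
          rw [Fin.sum_univ_succ]
          simp only [ha, muVec, Fin.cons_zero, Fin.cons_succ, one_mul]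
        rw [hlhs]
        show _ = (∑ k, w k * (x j k - x 0 k)) / Δ
        have h1 : ∑ k, x j k * (w k / Δ) = (∑ k, w k * x j k) / Δ := by
          rw [Finset.sum_div]
          exact Finset.sum_congr rfl fun k _ => by ring
        rw [h1, ← add_div]
        congr 1
        rw [neg_add_eq_sub, ← Finset.sum_sub_distrib]
        exact Finset.sum_congr rfl fun k _ => by ring
      set y : EuclideanSpace ℝ (Fin d) :=
        (WithLp.equiv 2 _).symm (fun k => x 0 k + (Δ / s) * w k) with hy
      have hyk : ∀ k, y k = x 0 k + (Δ / s) * w k := fun k => rfl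
      have hsub : ∀ k, (y - x 0) k = Δ / s * w k := by
        intro k
        have : (y - x 0) k = y k - x 0 k := rfl
        rw [this, hyk k]
        ring
      have hymem : y ∈ Metric.closedBall (x 0) Δ := by
        rw [Metric.mem_closedBall, dist_eq_norm]
        have h1 : ‖y - x 0‖ = Real.sqrt (∑ k, (Δ / s * w k) ^ 2) := by
          rw [EuclideanSpace.norm_eq]
          congr 1
          exact Finset.sum_congr rfl fun k _ => by
            rw [hsub k, Real.norm_eq_abs, sq_abs]
        have h2 : ∑ k, (Δ / s * w k) ^ 2 = Δ ^ 2 := by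
          have h3 : ∑ k, (Δ / s * w k) ^ 2 = (Δ / s) ^ 2 * ∑ k, w k ^ 2 := by
            rw [Finset.mul_sum]
            exact Finset.sum_congr rfl fun k _ => by ring
          rw [h3, ← hs2]
          field_simp
        rw [h1, h2, Real.sqrt_sq hΔ.le]
      have hq : ∑ i, a i * muVec y i = s := by
        rw [Fin.sum_univ_succ]
        simp only [ha, muVec, Fin.cons_zero, Fin.cons_succ, mul_one]
        have expand : ∑ i : Fin d, w i / Δ * y i
            = (∑ k, w k * x 0 k) / Δ + (∑ k, w k ^ 2) / s := by
          rw [Finset.sum_div, Finset.sum_div, ← Finset.sum_add_distrib]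
          refine Finset.sum_congr rfl fun k _ => ?_
          rw [hyk k]
          field_simp
        rw [show ∑ i : Fin d, (fun k => w k / Δ) i * (fun j => y j) i
            = ∑ i : Fin d, w i / Δ * y i from rfl, expand, ← hs2]
        field_simp
        ring
      have hval := reproduce a v hva y
      rw [hq] at hval
      have hv0 : v 0 = 0 := by simp [hv]
      have hvs : ∀ i : Fin p, v i.succ = (Lhat.mulVec w) i := by
        intro i
        simp only [hv, Matrix.mulVec, dotProduct, hLhat]
        rw [Finset.sum_div]
        exact Finset.sum_congr rfl fun k _ => by ring
      have hCS := Finset.sum_mul_sq_le_sq_mul_sq Finset.univ v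
        (fun j => modelFun (la j) (lb j) y)
      have hlbd : ∑ j, (modelFun (la j) (lb j) y) ^ 2 ≤ (p + 1 : ℝ) * Λ ^ 2 := by
        calc ∑ j, (modelFun (la j) (lb j) y) ^ 2 ≤ ∑ _j : Fin (p + 1), Λ ^ 2 := by
              refine Finset.sum_le_sum fun j _ => ?_
              have hb := hlampoised j y hymem
              calc (modelFun (la j) (lb j) y) ^ 2 = |modelFun (la j) (lb j) y| ^ 2 :=
                    (sq_abs _).symm
                _ ≤ Λ ^ 2 := pow_le_pow_left₀ (abs_nonneg _) hb 2
          _ = (p + 1 : ℝ) * Λ ^ 2 := by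
              rw [Finset.sum_const, Finset.card_univ, Fintype.card_fin, nsmul_eq_mul]
              push_cast
              ring
      have hvsum : ∑ j, v j ^ 2 = ∑ i, (Lhat.mulVec w) i ^ 2 := by
        rw [Fin.sum_univ_succ, hv0]
        simp only [hvs]
        ring
      have hfinal : s ^ 2 ≤ (∑ i, (Lhat.mulVec w) i ^ 2) * ((p + 1 : ℝ) * Λ ^ 2) := by
        calc s ^ 2 = (∑ j, v j * modelFun (la j) (lb j) y) ^ 2 := by rw [hval]
          _ ≤ (∑ j, v j ^ 2) * ∑ j, (modelFun (la j) (lb j) y) ^ 2 := hCS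
          _ ≤ (∑ j, v j ^ 2) * ((p + 1 : ℝ) * Λ ^ 2) :=
              mul_le_mul_of_nonneg_left hlbd (Finset.sum_nonneg fun _ _ => sq_nonneg _)
          _ = (∑ i, (Lhat.mulVec w) i ^ 2) * ((p + 1 : ℝ) * Λ ^ 2) := by rw [hvsum]
      rw [← hs2]
      linarith [hfinal]
  -- Step 3: conclude the operator norm bound.
  have hc : (0 : ℝ) ≤ Real.sqrt (p + 1) * Λ := mul_nonneg (Real.sqrt_nonneg _) hΛ.le
  refine ContinuousLinearMap.opNorm_le_bound _ hc fun z => ?_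
  obtain ⟨z', hz'⟩ : ∃ z' : Fin p → ℝ, z' = WithLp.equiv 2 _ z := ⟨_, rfl⟩
  obtain ⟨w, hwdef⟩ : ∃ w : Fin d → ℝ, w = Lpinv.mulVec z' := ⟨_, rfl⟩
  obtain ⟨u, hudef⟩ : ∃ u : Fin p → ℝ, u = Lhat.mulVec w := ⟨_, rfl⟩
  have hu : Lhatᵀ.mulVec u = Lhatᵀ.mulVec z' := by
    calc Lhatᵀ.mulVec u = ((Lhatᵀ * Lhat) * ((Lhatᵀ * Lhat)⁻¹ * Lhatᵀ)).mulVec z' := by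
          rw [hudef, hwdef, hLpinv, Matrix.mulVec_mulVec, Matrix.mulVec_mulVec,
            Matrix.mul_assoc]
      _ = Lhatᵀ.mulVec z' := by
          rw [← Matrix.mul_assoc, Matrix.mul_nonsing_inv _ hinv, Matrix.one_mul]
  have hu2 : ∑ i, u i ^ 2 = ∑ i, u i * z' i := by
    calc ∑ i, u i ^ 2 = dotProduct u (Lhat.mulVec w) :=
          Finset.sum_congr rfl fun i _ => by rw [← hudef]; ring
      _ = dotProduct (Lhatᵀ.mulVec u) w := by
          rw [Matrix.dotProduct_mulVec, Matrix.mulVec_transpose]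
      _ = dotProduct (Lhatᵀ.mulVec z') w := by rw [hu]
      _ = dotProduct z' (Lhat.mulVec w) := by
          rw [Matrix.mulVec_transpose, Matrix.dotProduct_mulVec]
      _ = ∑ i, u i * z' i := by
          rw [← hudef, dotProduct]
          exact Finset.sum_congr rfl fun i _ => by ring
  have hU0 : (0 : ℝ) ≤ ∑ i, u i ^ 2 := Finset.sum_nonneg fun _ _ => sq_nonneg _
  have hZ0 : (0 : ℝ) ≤ ∑ i, z' i ^ 2 := Finset.sum_nonneg fun _ _ => sq_nonneg _
  have hUZ : ∑ i, u i ^ 2 ≤ ∑ i, z' i ^ 2 := by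
    rcases eq_or_lt_of_le hU0 with h | h
    · rw [← h]; exact hZ0
    · have hCS := Finset.sum_mul_sq_le_sq_mul_sq Finset.univ u z'
      rw [← hu2] at hCS
      have : (∑ i, u i ^ 2) * (∑ i, u i ^ 2) ≤ (∑ i, u i ^ 2) * (∑ i, z' i ^ 2) := by
        nlinarith [hCS]
      exact le_of_mul_le_mul_left this h
  have hWZ : ∑ k, w k ^ 2 ≤ ((p + 1 : ℝ) * Λ ^ 2) * ∑ i, z' i ^ 2 := by
    calc ∑ k, w k ^ 2 ≤ ((p + 1 : ℝ) * Λ ^ 2) * ∑ i, u i ^ 2 := by rw [hudef]; exact core w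
      _ ≤ ((p + 1 : ℝ) * Λ ^ 2) * ∑ i, z' i ^ 2 :=
          mul_le_mul_of_nonneg_left hUZ (by positivity)
  have hnormz : ‖z‖ = Real.sqrt (∑ i, z' i ^ 2) := by
    rw [EuclideanSpace.norm_eq]
    congr 1
    exact Finset.sum_congr rfl fun i _ => by rw [Real.norm_eq_abs, sq_abs, hz']; rfl
  have hnormLz : ‖(Matrix.toEuclideanLin Lpinv).toContinuousLinearMap z‖
      = Real.sqrt (∑ k, w k ^ 2) := by
    rw [LinearMap.coe_toContinuousLinearMap', Matrix.toEuclideanLin_apply,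
      EuclideanSpace.norm_eq]
    congr 1
    refine Finset.sum_congr rfl fun k _ => ?_
    rw [Real.norm_eq_abs, sq_abs, hwdef, hz']
    rfl
  rw [hnormLz, hnormz]
  calc Real.sqrt (∑ k, w k ^ 2)
      ≤ Real.sqrt (((p + 1 : ℝ) * Λ ^ 2) * ∑ i, z' i ^ 2) := Real.sqrt_le_sqrt hWZ
    _ = Real.sqrt (p + 1) * Λ * Real.sqrt (∑ i, z' i ^ 2) := by
        rw [Real.sqrt_mul (by positivity), Real.sqrt_mul (by positivity), Real.sqrt_sq hΛ.le]

end
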